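/- For a group G, there is a bijection between: (a) conjugate-closed filters of the lattice Subgroup G, and (b) topologies on G making G a topological group in which the open subgroups form a neighborhood basis of the identity. The bijection sends a topology to its set of open subgroups. -/

import Mathlib

open Topology Filter

section Aux

variable {G : Type*} [Group G]

/-- The group filter basis associated to a conjugate-closed filter of subgroups. -/
def ccfBasis (F : Set (Subgroup G))
    (htop : (⊤ : Subgroup G) ∈ F)
    (hinf : ∀ H H' : Subgroup G, H ∈ F → H' ∈ F → H ⊓ H' ∈ F)
    (hconj : ∀ (H : Subgroup G) (g : G), H ∈ F → H.map (MulAut.conj g).toMonoidHom ∈ F) :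
    GroupFilterBasis G where
  sets := (fun H : Subgroup G => (H : Set G)) '' F
  nonempty := ⟨_, ⟨⊤, htop, rfl⟩⟩
  inter_sets := by
    rintro _ _ ⟨H, hH, rfl⟩ ⟨K, hK, rfl⟩
    refine ⟨((H ⊓ K : Subgroup G) : Set G), ⟨H ⊓ K, hinf H K hH hK, rfl⟩, ?_⟩
    simp
  one' := by rintro _ ⟨H, hH, rfl⟩; exact H.one_mem
  mul' := by
    rintro _ ⟨H, hH, rfl⟩
    refine ⟨(H : Set G), ⟨H, hH, rfl⟩, ?_⟩
    rintro x ⟨a, ha, b, hb, rfl⟩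
    exact H.mul_mem ha hb
  inv' := by
    rintro _ ⟨H, hH, rfl⟩
    exact ⟨(H : Set G), ⟨H, hH, rfl⟩, fun x hx => H.inv_mem hx⟩
  conj' := by
    rintro x _ ⟨H, hH, rfl⟩
    refine ⟨_, ⟨_, hconj H x⁻¹ hH, rfl⟩, ?_⟩
    rintro y hy
    simp only [Subgroup.coe_map, Set.mem_image, SetLike.mem_coe] at hy
    obtain ⟨h, hh, rfl⟩ := hy
    simp only [Set.mem_preimage, MulAut.conj_apply, SetLike.mem_coe]
    simp only [MulEquiv.coe_toMonoidHom, MulAut.conj_apply]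
    have : x * (x⁻¹ * h * x⁻¹⁻¹) * x⁻¹ = h := by group
    rw [this]; exact hh

theorem isOpen_ccfBasis_iff (F : Set (Subgroup G))
    (htop : (⊤ : Subgroup G) ∈ F)
    (hinf : ∀ H H' : Subgroup G, H ∈ F → H' ∈ F → H ⊓ H' ∈ F)
    (hup : ∀ H H' : Subgroup G, H ∈ F → H ≤ H' → H' ∈ F)
    (hconj : ∀ (H : Subgroup G) (g : G), H ∈ F → H.map (MulAut.conj g).toMonoidHom ∈ F)
    (H : Subgroup G) :
    @IsOpen G (ccfBasis F htop hinf hconj).topology (H : Set G) ↔ H ∈ F := by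
  letI := (ccfBasis F htop hinf hconj).topology
  constructor
  · intro hH
    have h1 : (H : Set G) ∈ @nhds G (ccfBasis F htop hinf hconj).topology 1 :=
      hH.mem_nhds H.one_mem
    rw [(ccfBasis F htop hinf hconj).nhds_one_hasBasis.mem_iff] at h1
    obtain ⟨V, ⟨K, hK, rfl⟩, hV⟩ := h1
    exact hup K H hK hV
  · intro hH
    exact Subgroup.isOpen_of_mem_nhds H
      ((ccfBasis F htop hinf hconj).mem_nhds_one ⟨H, hH, rfl⟩)

theorem isOpen_conj [TopologicalSpace G] [IsTopologicalGroup G]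
    (H : Subgroup G) (g : G) (hH : IsOpen (H : Set G)) :
    IsOpen ((H.map (MulAut.conj g).toMonoidHom : Subgroup G) : Set G) := by
  have : ((H.map (MulAut.conj g).toMonoidHom : Subgroup G) : Set G)
      = (fun x => g⁻¹ * x * g) ⁻¹' (H : Set G) := by
    ext x
    simp only [Subgroup.coe_map, Set.mem_image, SetLike.mem_coe, Set.mem_preimage,
      MulAut.conj_apply, MonoidHom.coe_coe]
    constructor
    · rintro ⟨h, hh, rfl⟩
      simp only [MulEquiv.coe_toMonoidHom, MulAut.conj_apply]
      have : g⁻¹ * (g * h * g⁻¹) * g = h := by group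
      rw [this]; exact hh
    · intro hx
      refine ⟨g⁻¹ * x * g, hx, ?_⟩
      show g * (g⁻¹ * x * g) * g⁻¹ = x
      group
  rw [this]
  exact hH.preimage (by continuity)

end Aux

theorem simple_topological_group_structures_biject_with_conjugate_closed_filters
    (G : Type*) [Group G] :
    ∃ e : {τ : TopologicalSpace G // @IsTopologicalGroup G τ _ ∧
            ∀ s ∈ @nhds G τ 1, ∃ H : Subgroup G, @IsOpen G τ (H : Set G) ∧ (H : Set G) ⊆ s}
          ≃ {F : Set (Subgroup G) // (⊤ : Subgroup G) ∈ F
              ∧ (∀ H H' : Subgroup G, H ∈ F → H' ∈ F → H ⊓ H' ∈ F)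
              ∧ (∀ H H' : Subgroup G, H ∈ F → H ≤ H' → H' ∈ F)
              ∧ (∀ (H : Subgroup G) (g : G), H ∈ F →
                  H.map (MulAut.conj g).toMonoidHom ∈ F)},
      ∀ τ, (e τ : Set (Subgroup G)) = {H : Subgroup G | @IsOpen G τ.1 (H : Set G)} := by
  classical
  refine ⟨⟨fun τ => ⟨{H : Subgroup G | @IsOpen G τ.1 (H : Set G)}, ?_, ?_, ?_, ?_⟩,
      fun F => ⟨(ccfBasis F.1 F.2.1 F.2.2.1 F.2.2.2.2).topology, ?_, ?_⟩, ?_, ?_⟩,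
    fun τ => rfl⟩
  · -- top open
    letI := τ.1
    set_option linter.unnecessarySimpa false in simpa using (isOpen_univ : IsOpen (Set.univ : Set G))
  · -- inf
    letI := τ.1
    intro H H' hH hH'
    simpa using IsOpen.inter hH hH'
  · -- upward
    letI := τ.1
    haveI := τ.2.1
    intro H H' hH hle
    exact Subgroup.isOpen_mono hle hH
  · -- conj
    letI := τ.1
    haveI := τ.2.1
    intro H g hH
    exact isOpen_conj H g hH
  · -- TopologicalGroup for constructed topology
    exact (ccfBasis F.1 F.2.1 F.2.2.1 F.2.2.2.2).isTopologicalGroup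
  · -- nhds basis of open subgroups
    intro s hs
    rw [(ccfBasis F.1 F.2.1 F.2.2.1 F.2.2.2.2).nhds_one_hasBasis.mem_iff] at hs
    obtain ⟨V, ⟨K, hK, rfl⟩, hV⟩ := hs
    exact ⟨K, (isOpen_ccfBasis_iff F.1 F.2.1 F.2.2.1 F.2.2.2.1 F.2.2.2.2 K).2 hK, hV⟩
  · -- left inverse
    rintro ⟨τ, hτg, hτs⟩
    ext1
    dsimp only
    set F : Set (Subgroup G) := {H : Subgroup G | @IsOpen G τ (H : Set G)} with hF
    letI := τ
    haveI := hτg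
    have h1 : (⊤ : Subgroup G) ∈ F := by
      simp only [hF, Set.mem_setOf_eq, Subgroup.coe_top]; exact isOpen_univ
    have h2 : ∀ H H' : Subgroup G, H ∈ F → H' ∈ F → H ⊓ H' ∈ F := by
      intro H H' hH hH'
      simp only [hF, Set.mem_setOf_eq, Subgroup.coe_inf]
      exact IsOpen.inter hH hH'
    have h3 : ∀ (H : Subgroup G) (g : G), H ∈ F → H.map (MulAut.conj g).toMonoidHom ∈ F :=
      fun H g hH => isOpen_conj H g hH
    refine @IsTopologicalGroup.ext G _ _ τ
      ((ccfBasis F h1 h2 h3).isTopologicalGroup) hτg ?_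
    ext s
    rw [(ccfBasis F h1 h2 h3).nhds_one_hasBasis.mem_iff]
    constructor
    · rintro ⟨V, ⟨K, hK, rfl⟩, hV⟩
      exact Filter.mem_of_superset (hK.mem_nhds K.one_mem) hV
    · intro hs
      obtain ⟨H, hH, hsub⟩ := hτs s hs
      exact ⟨(H : Set G), ⟨H, hH, rfl⟩, hsub⟩
  · -- right inverse
    rintro ⟨F, htop, hinf, hup, hconj⟩
    ext H
    exact isOpen_ccfBasis_iff F htop hinf hup hconj H
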